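/- For every p×q real matrix W and every b ∈ ℝ^p, the map h : G_q → G_p defined by h(Υ) = (Υ₁, W·Υ₂ + (1 − e^{−Υ₁})·b) is a group homomorphism: h(Ψ * Υ) = h(Ψ) * h(Υ) for all Ψ, Υ ∈ G_q. -/

import Mathlib

/-- The solvable group operation on `ℝ × ℝ^n`:
`Ψ * Υ = (Υ₁ + Ψ₁, Υ₂ + e^{−Υ₁}·Ψ₂)`. -/
noncomputable def gmul {n : ℕ} (Ψ Υ : ℝ × EuclideanSpace ℝ (Fin n)) :
    ℝ × EuclideanSpace ℝ (Fin n) :=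
  (Υ.1 + Ψ.1, Υ.2 + Real.exp (-Υ.1) • Ψ.2)

/-- Matrix–vector multiplication `W·x` on Euclidean spaces. -/
noncomputable def mulVecE {p q : ℕ} (W : Matrix (Fin p) (Fin q) ℝ)
    (x : EuclideanSpace ℝ (Fin q)) : EuclideanSpace ℝ (Fin p) :=
  WithLp.toLp 2 (fun i => ∑ j, W i j * x j)

/-- For every `p×q` real matrix `W` and every `b ∈ ℝ^p`, the map
`h(Υ) = (Υ₁, W·Υ₂ + (1 − e^{−Υ₁})·b)` is a group homomorphism from `G_q` to `G_p`. -/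
theorem stmt_3 (p q : ℕ) (hp : 1 ≤ p) (hq : 1 ≤ q)
    (W : Matrix (Fin p) (Fin q) ℝ) (b : EuclideanSpace ℝ (Fin p)) :
    ∀ Ψ Υ : ℝ × EuclideanSpace ℝ (Fin q),
      (fun Υ : ℝ × EuclideanSpace ℝ (Fin q) =>
          ((Υ.1, mulVecE W Υ.2 + (1 - Real.exp (-Υ.1)) • b) :
            ℝ × EuclideanSpace ℝ (Fin p))) (gmul Ψ Υ)
        = gmul ((Ψ.1, mulVecE W Ψ.2 + (1 - Real.exp (-Ψ.1)) • b))
            ((Υ.1, mulVecE W Υ.2 + (1 - Real.exp (-Υ.1)) • b)) := by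
  intro Ψ Υ
  simp only [gmul, mulVecE]
  refine Prod.ext rfl ?_
  ext i
  simp only [mulVecE, PiLp.add_apply, PiLp.smul_apply, smul_eq_mul, Pi.add_apply, PiLp.toLp_apply,
    mul_add, Finset.sum_add_distrib, Real.exp_add, neg_add, Finset.mul_sum]
  ring_nf
  rw [add_right_comm]
  congr 1
  exact Finset.sum_congr rfl fun j _ => by ring
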